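/- Let K_n be the complete graph on n vertices, n ≥ 2, and let m ≥ 1 be a real number (dimension parameter). Then for every function f on the vertices and every vertex x, Γ₂(f,f)(x) ≥ (1/m)(Δf(x))² + ((4−n)/(2(n−1)) + (m−2)/m)·Γ(f,f)(x). Moreover, for every fixed m the curvature constant (4−n)/(2(n−1)) + (m−2)/m is optimal: there exists a function f with Γ(f,f)(x) ≠ 0 for which equality holds. -/

import Mathlib

open SimpleGraph Finset

variable {V : Type*}

/-- The probability measure attached to a vertex `x`: uniform on its neighbors. -/
noncomputable def nbrMeasure (G : SimpleGraph V) [G.LocallyFinite] [DecidableRel G.Adj]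
    (x z : V) : ℝ :=
  if G.Adj x z then ((G.degree x : ℝ))⁻¹ else 0

/-- A coupling (transfer plan) between the measures `m_x` and `m_y`. -/
def IsCoupling (G : SimpleGraph V) [G.LocallyFinite] [DecidableRel G.Adj]
    (x y : V) (ξ : V → V → ℝ) : Prop :=
  (∀ u v, 0 ≤ ξ u v) ∧
  (∀ u v, ξ u v ≠ 0 → G.Adj x u ∧ G.Adj y v) ∧
  (∀ u, ∑ v ∈ G.neighborFinset y, ξ u v = nbrMeasure G x u) ∧
  (∀ v, ∑ u ∈ G.neighborFinset x, ξ u v = nbrMeasure G y v)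

/-- The transportation distance `W₁(m_x, m_y)`. -/
noncomputable def W1 (G : SimpleGraph V) [G.LocallyFinite] [DecidableRel G.Adj]
    (x y : V) : ℝ :=
  sInf { c : ℝ | ∃ ξ : V → V → ℝ, IsCoupling G x y ξ ∧
    c = ∑ u ∈ G.neighborFinset x, ∑ v ∈ G.neighborFinset y, (G.dist u v : ℝ) * ξ u v }

/-- Ollivier's Ricci curvature `κ(x,y) = 1 - W₁(m_x,m_y)/d(x,y)`. -/
noncomputable def ricci (G : SimpleGraph V) [G.LocallyFinite] [DecidableRel G.Adj]
    (x y : V) : ℝ :=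
  1 - W1 G x y / (G.dist x y : ℝ)

/-- Positive part of a real number: `a₊ = max a 0`. -/
noncomputable def posPart' (a : ℝ) : ℝ := max a 0

/-- `♯(x,y)`: the number of common neighbors of `x` and `y`. -/
def triangles (G : SimpleGraph V) [G.LocallyFinite] [DecidableEq V] (x y : V) : ℕ :=
  (G.neighborFinset x ∩ G.neighborFinset y).card

/-- The graph Laplacian `Δf(x) = (1/d_x)∑_{y∼x} f(y) - f(x)`. -/
noncomputable def lap (G : SimpleGraph V) [G.LocallyFinite] (f : V → ℝ) (x : V) : ℝ :=
  (G.degree x : ℝ)⁻¹ * ∑ y ∈ G.neighborFinset x, f y - f x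

/-- The Bakry–Émery operator `Γ(f,g)(x) = (1/2)(Δ(fg) - fΔg - gΔf)(x)`. -/
noncomputable def gam (G : SimpleGraph V) [G.LocallyFinite] (f g : V → ℝ) (x : V) : ℝ :=
  (1 / 2) * (lap G (f * g) x - f x * lap G g x - g x * lap G f x)

/-- The Bakry–Émery operator `Γ₂(f,f)(x) = (1/2)(ΔΓ(f,f) - 2Γ(f,Δf))(x)`. -/
noncomputable def gam2 (G : SimpleGraph V) [G.LocallyFinite] (f : V → ℝ) (x : V) : ℝ :=
  (1 / 2) * (lap G (gam G f f) x - 2 * gam G f (lap G f) x)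

section helpers
variable {n : ℕ}

lemma nbr_top (x : Fin n) :
    (⊤ : SimpleGraph (Fin n)).neighborFinset x = univ.erase x := by
  ext y; simp [SimpleGraph.mem_neighborFinset, ne_comm, eq_comm]

lemma deg_top (hn : 2 ≤ n) (x : Fin n) :
    ((⊤ : SimpleGraph (Fin n)).degree x : ℝ) = (n : ℝ) - 1 := by
  rw [SimpleGraph.degree, nbr_top, Finset.card_erase_of_mem (mem_univ x), card_univ,
    Fintype.card_fin]
  push_cast [Nat.cast_sub (by omega : 1 ≤ n)]
  ring

lemma lap_top (hn : 2 ≤ n) (f : Fin n → ℝ) (x : Fin n) :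
    lap (⊤ : SimpleGraph (Fin n)) f x = ((n : ℝ) - 1)⁻¹ * ((∑ y, f y) - f x) - f x := by
  rw [lap, nbr_top, deg_top hn, Finset.sum_erase_eq_sub (mem_univ x)]

end helpers

lemma gam_top (hn : 2 ≤ n) (f g : Fin n → ℝ) (x : Fin n) :
    gam (⊤ : SimpleGraph (Fin n)) f g x =
      (2 * ((n : ℝ) - 1))⁻¹ * ∑ y, (f y - f x) * (g y - g x) := by
  have hd : ((n : ℝ) - 1) ≠ 0 := by
    have : (2 : ℝ) ≤ (n : ℝ) := by exact_mod_cast hn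
    nlinarith
  have hpt : ∀ y, (f y - f x) * (g y - g x)
      = f y * g y - f x * g y - f y * g x + f x * g x := fun y => by ring
  have hsum : ∑ y, (f y - f x) * (g y - g x) =
      (∑ y, f y * g y) - f x * (∑ y, g y) - g x * (∑ y, f y) + (n : ℝ) * (f x * g x) := by
    simp only [hpt, Finset.sum_add_distrib, Finset.sum_sub_distrib, ← Finset.mul_sum,
      ← Finset.sum_mul, Finset.sum_const, card_univ, Fintype.card_fin, nsmul_eq_mul]
    ring
  rw [gam, lap_top hn, lap_top hn, lap_top hn, hsum]
  have : ∑ y, (f * g) y = ∑ y, f y * g y := by simp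
  rw [this]
  field_simp
  simp only [Pi.mul_apply]
  ring

lemma gam2_top (hn : 2 ≤ n) (f : Fin n → ℝ) (x : Fin n) :
    gam2 (⊤ : SimpleGraph (Fin n)) f x =
      (3 * n * (∑ y, (f y - f x) ^ 2) - 2 * (∑ y, (f y - f x)) ^ 2) /
        (4 * ((n : ℝ) - 1) ^ 2) := by
  have hd : ((n : ℝ) - 1) ≠ 0 := by
    have : (2 : ℝ) ≤ (n : ℝ) := by exact_mod_cast hn
    nlinarith
  set d : ℝ := (n : ℝ) - 1 with hdd
  set A : ℝ := ∑ y, (f y - f x) ^ 2 with hA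
  set B : ℝ := ∑ y, (f y - f x) with hB
  -- sum of gamma over all vertices
  have hgam : ∀ y, gam (⊤ : SimpleGraph (Fin n)) f f y
      = (2 * d)⁻¹ * ∑ z, (f z - f y) * (f z - f y) := fun y => gam_top hn f f y
  have hinner : ∀ y, ∑ z, (f z - f y) * (f z - f y)
      = A - (2 * (f y - f x)) * B + (n : ℝ) * ((f y - f x) * (f y - f x)) := by
    intro y
    have hp : ∀ z, (f z - f y) * (f z - f y)
        = (f z - f x) ^ 2 - (2 * (f y - f x)) * (f z - f x)
          + (f y - f x) * (f y - f x) := fun z => by ring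
    simp only [hp, Finset.sum_add_distrib, Finset.sum_sub_distrib, ← Finset.mul_sum,
      Finset.sum_const, card_univ, Fintype.card_fin, nsmul_eq_mul, ← hA, ← hB]
    ring
  have hsumgam : ∑ y, gam (⊤ : SimpleGraph (Fin n)) f f y
      = (2 * d)⁻¹ * (2 * (n : ℝ) * A - 2 * B ^ 2) := by
    simp only [hgam, ← Finset.mul_sum]
    congr 1
    have h3 : ∀ y : Fin n, A - (2 * (f y - f x)) * B + (n : ℝ) * ((f y - f x) * (f y - f x))
        = A - (2 * B) * (f y - f x) + (n : ℝ) * (f y - f x) ^ 2 := fun y => by ring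
    calc ∑ y, ∑ z, (f z - f y) * (f z - f y)
        = ∑ y, (A - (2 * B) * (f y - f x) + (n : ℝ) * (f y - f x) ^ 2) := by
          simp only [hinner, h3]
      _ = (n : ℝ) * A - (2 * B) * B + (n : ℝ) * A := by
          simp only [Finset.sum_add_distrib, Finset.sum_sub_distrib, ← Finset.mul_sum,
            Finset.sum_const, card_univ, Fintype.card_fin, nsmul_eq_mul, ← hA, ← hB]
      _ = 2 * (n : ℝ) * A - 2 * B ^ 2 := by ring
  have hgamx : gam (⊤ : SimpleGraph (Fin n)) f f x = (2 * d)⁻¹ * A := by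
    rw [hgam x]
    congr 1
    rw [hA]; congr 1; funext z; ring
  -- the term gam f (lap f)
  have hlapdiff : ∀ y, lap (⊤ : SimpleGraph (Fin n)) f y - lap (⊤ : SimpleGraph (Fin n)) f x
      = -(d⁻¹ + 1) * (f y - f x) := by
    intro y; rw [lap_top hn, lap_top hn, ← hdd]; ring
  have hgamlap : gam (⊤ : SimpleGraph (Fin n)) f (lap (⊤ : SimpleGraph (Fin n)) f) x
      = (2 * d)⁻¹ * (-(d⁻¹ + 1) * A) := by
    rw [gam_top hn]
    congr 1
    have hp : ∀ y, (f y - f x) *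
        (lap (⊤ : SimpleGraph (Fin n)) f y - lap (⊤ : SimpleGraph (Fin n)) f x)
        = -(d⁻¹ + 1) * (f y - f x) ^ 2 := by
      intro y; rw [hlapdiff y]; ring
    simp only [hp, ← Finset.mul_sum, ← hA]
  rw [gam2, lap_top hn, hsumgam, hgamx, hgamlap, ← hdd]
  field_simp
  ring

lemma lapB (hn : 2 ≤ n) (f : Fin n → ℝ) (x : Fin n) :
    lap (⊤ : SimpleGraph (Fin n)) f x = (∑ y, (f y - f x)) / ((n : ℝ) - 1) := by
  have hd : ((n : ℝ) - 1) ≠ 0 := by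
    have : (2 : ℝ) ≤ (n : ℝ) := by exact_mod_cast hn
    nlinarith
  rw [lap_top hn, Finset.sum_sub_distrib, Finset.sum_const, card_univ, Fintype.card_fin,
    nsmul_eq_mul]
  field_simp
  ring

lemma gamA (hn : 2 ≤ n) (f : Fin n → ℝ) (x : Fin n) :
    gam (⊤ : SimpleGraph (Fin n)) f f x
      = (2 * ((n : ℝ) - 1))⁻¹ * ∑ y, (f y - f x) ^ 2 := by
  rw [gam_top hn]
  congr 1
  exact Finset.sum_congr rfl fun y _ => by ring

lemma ident (hn : 2 ≤ n) {m : ℝ} (hm : 1 ≤ m) (f : Fin n → ℝ) (x : Fin n) :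
    gam2 (⊤ : SimpleGraph (Fin n)) f x =
      (1 / m) * (lap (⊤ : SimpleGraph (Fin n)) f x) ^ 2 +
        ((4 - (n : ℝ)) / (2 * ((n : ℝ) - 1)) + (m - 2) / m) *
          gam (⊤ : SimpleGraph (Fin n)) f f x +
        (m + 2) / (2 * m * ((n : ℝ) - 1) ^ 2) *
          (((n : ℝ) - 1) * (∑ y, (f y - f x) ^ 2) - (∑ y, (f y - f x)) ^ 2) := by
  have hd : ((n : ℝ) - 1) ≠ 0 := by
    have : (2 : ℝ) ≤ (n : ℝ) := by exact_mod_cast hn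
    nlinarith
  have hm0 : m ≠ 0 := by linarith
  rw [gam2_top hn, lapB hn, gamA hn]
  field_simp
  ring


/-- On the complete graph `K_n` (`n ≥ 2`), for every real dimension
parameter `m ≥ 1`, the Laplacian satisfies
`Γ₂(f,f)(x) ≥ (1/m)(Δf(x))² + ((4-n)/(2(n-1)) + (m-2)/m)·Γ(f,f)(x)`,
and for every vertex the curvature constant is optimal: there is a function `f` with
`Γ(f,f)(x) ≠ 0` attaining equality. -/
theorem CD_complete_graph_dimension (n : ℕ) (hn : 2 ≤ n) (m : ℝ) (hm : 1 ≤ m) :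
    (∀ (f : Fin n → ℝ) (x : Fin n),
      gam2 (⊤ : SimpleGraph (Fin n)) f x ≥
        (1 / m) * (lap (⊤ : SimpleGraph (Fin n)) f x) ^ 2 +
          ((4 - (n : ℝ)) / (2 * ((n : ℝ) - 1)) + (m - 2) / m) *
            gam (⊤ : SimpleGraph (Fin n)) f f x) ∧
    (∀ x : Fin n, ∃ f : Fin n → ℝ,
      gam (⊤ : SimpleGraph (Fin n)) f f x ≠ 0 ∧
      gam2 (⊤ : SimpleGraph (Fin n)) f x =
        (1 / m) * (lap (⊤ : SimpleGraph (Fin n)) f x) ^ 2 +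
          ((4 - (n : ℝ)) / (2 * ((n : ℝ) - 1)) + (m - 2) / m) *
            gam (⊤ : SimpleGraph (Fin n)) f f x) := by
  have hd : (0 : ℝ) < (n : ℝ) - 1 := by
    have : (2 : ℝ) ≤ (n : ℝ) := by exact_mod_cast hn
    linarith
  have hm0 : (0 : ℝ) < m := by linarith
  constructor
  · intro f x
    rw [ge_iff_le, ident hn hm f x]
    have hCS : (∑ y, (f y - f x)) ^ 2 ≤ ((n : ℝ) - 1) * ∑ y, (f y - f x) ^ 2 := by
      have hz : (fun y => f y - f x) x = 0 := by simp
      have hB : ∑ y ∈ univ.erase x, (f y - f x) = ∑ y, (f y - f x) :=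
        Finset.sum_erase _ hz
      have hA : ∑ y ∈ univ.erase x, (f y - f x) ^ 2 = ∑ y, (f y - f x) ^ 2 := by
        refine Finset.sum_erase _ ?_
        simp
      have hcard : ((univ.erase x).card : ℝ) = (n : ℝ) - 1 := by
        rw [Finset.card_erase_of_mem (mem_univ x), card_univ, Fintype.card_fin]
        push_cast [Nat.cast_sub (by omega : 1 ≤ n)]
        ring
      have := sq_sum_le_card_mul_sum_sq
        (s := univ.erase x) (f := fun y => f y - f x)
      rw [hB, hA] at this
      calc (∑ y, (f y - f x)) ^ 2 ≤ ((univ.erase x).card : ℝ) * ∑ y, (f y - f x) ^ 2 := by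
            exact_mod_cast this
        _ = ((n : ℝ) - 1) * ∑ y, (f y - f x) ^ 2 := by rw [hcard]
    have hpos : (0 : ℝ) ≤ (m + 2) / (2 * m * ((n : ℝ) - 1) ^ 2) := by positivity
    nlinarith [mul_nonneg hpos (by linarith : (0:ℝ) ≤ ((n : ℝ) - 1) * (∑ y, (f y - f x) ^ 2) - (∑ y, (f y - f x)) ^ 2)]
  · intro x
    set f : Fin n → ℝ := fun y => if y = x then 0 else 1 with hf
    have hpt : ∀ y, f y - f x = if y = x then 0 else 1 := by
      intro y; simp [hf]
    have hpt2 : ∀ y, (f y - f x) ^ 2 = if y = x then 0 else 1 := by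
      intro y; rw [hpt]; by_cases h : y = x <;> simp [h]
    have hsum : ∑ y : Fin n, (if y = x then (0 : ℝ) else 1) = (n : ℝ) - 1 := by
      have h1 : ∀ y : Fin n, (if y = x then (0 : ℝ) else 1)
          = 1 - (if y = x then 1 else 0) := by
        intro y; by_cases h : y = x <;> simp [h]
      simp only [h1, Finset.sum_sub_distrib, Finset.sum_const, Finset.sum_ite_eq',
        mem_univ, if_true, card_univ, Fintype.card_fin, nsmul_eq_mul, mul_one]
    have hB : ∑ y, (f y - f x) = (n : ℝ) - 1 := by simp only [hpt]; exact hsum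
    have hA : ∑ y, (f y - f x) ^ 2 = (n : ℝ) - 1 := by simp only [hpt2]; exact hsum
    refine ⟨f, ?_, ?_⟩
    · rw [gamA hn, hA]
      have : (0 : ℝ) < (2 * ((n : ℝ) - 1))⁻¹ * ((n : ℝ) - 1) := by positivity
      exact ne_of_gt this
    · rw [ident hn hm f x, hA, hB]
      ring
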